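/- Let V be a finite set with |V| = n, E⁺, E⁻ ⊆ binom(V,2), H := (V, E⁺ ∪ E⁻), and C := {X ∈ S₊^V : trace(X) = 1, X_{ij} ≥ 0 ∀ij ∈ E⁺, X_{ij} ≤ 0 ∀ij ∈ E⁻}. Then the set of vertices of C equals {e_k e_kᵀ : k ∈ V, deg_H(k) = n − 1}. -/

import Mathlib

open Matrix

/-- The normal cone, within the space of symmetric matrices (with the trace inner
product), of a set `C` of symmetric matrices at a point `X`. -/
def normalConeM {ι : Type*} [Fintype ι] (C : Set (Matrix ι ι ℝ)) (X : Matrix ι ι ℝ) :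
    Set (Matrix ι ι ℝ) :=
  {c | c.IsSymm ∧ ∀ Y ∈ C, (c * Y).trace ≤ (c * X).trace}

/-- A point of a convex set of symmetric matrices is a vertex if its normal cone is
full-dimensional in the space `Sym(ι)` of symmetric matrices, whose dimension is
`card ι * (card ι + 1) / 2`. -/
def IsVertex {ι : Type*} [Fintype ι] (C : Set (Matrix ι ι ℝ)) (X : Matrix ι ι ℝ) : Prop :=
  X ∈ C ∧ Module.finrank ℝ (Submodule.span ℝ (normalConeM C X))
      = Fintype.card ι * (Fintype.card ι + 1) / 2

set_option linter.unusedSectionVars false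

section Infra
variable {V : Type*} [Fintype V] [DecidableEq V]

lemma tr_mul_eq (c M : Matrix V V ℝ) : (c * M).trace = ∑ a, ∑ b, c a b * M b a := by
  simp [Matrix.trace, Matrix.mul_apply, Matrix.diag]

lemma halfspace_trick (α β : ℝ) (h : ∀ t : ℝ, |t| ≤ 1/2 → t*α + t^2*β ≤ 0) : α = 0 := by
  by_contra hα
  rcases lt_or_gt_of_ne hα with hneg | hpos
  · set m : ℝ := min (1/2) ((-α)/(2*(|β|+1))) with hmdef
    have hb : 0 ≤ |β| := abs_nonneg β
    have hβ : β ≤ |β| := le_abs_self β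
    have hβ' : -|β| ≤ β := neg_abs_le β
    have h1 : 0 < m := lt_min (by norm_num) (div_pos (by linarith) (by positivity))
    have h2 : m ≤ (-α)/(2*(|β|+1)) := min_le_right _ _
    have h3 : m ≤ 1/2 := min_le_left _ _
    have := h (-m) (by rw [abs_neg, abs_of_pos h1]; exact h3)
    have hm : m * (2*(|β|+1)) ≤ -α := by
      rw [← le_div_iff₀ (by positivity)]; exact h2
    nlinarith [mul_le_mul_of_nonneg_left hm h1.le, mul_pos h1 h1]
  · set m : ℝ := min (1/2) (α/(2*(|β|+1))) with hmdef
    have hb : 0 ≤ |β| := abs_nonneg β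
    have hβ' : -|β| ≤ β := neg_abs_le β
    have h1 : 0 < m := lt_min (by norm_num) (div_pos (by linarith) (by positivity))
    have h2 : m ≤ α/(2*(|β|+1)) := min_le_right _ _
    have h3 : m ≤ 1/2 := min_le_left _ _
    have := h m (by rw [abs_of_pos h1]; exact h3)
    have hm : m * (2*(|β|+1)) ≤ α := by
      rw [← le_div_iff₀ (by positivity)]; exact h2
    nlinarith [mul_le_mul_of_nonneg_left hm h1.le, mul_pos h1 h1]

def symSub (V : Type*) [Fintype V] : Submodule ℝ (Matrix V V ℝ) where
  carrier := {A | A.IsSymm}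
  add_mem' := fun ha hb => Matrix.IsSymm.add ha hb
  zero_mem' := Matrix.isSymm_zero
  smul_mem' := fun c A hA => by
    show (c • A)ᵀ = c • A
    rw [Matrix.transpose_smul, hA]

lemma mem_symSub {A : Matrix V V ℝ} : A ∈ symSub V ↔ A.IsSymm := Iff.rfl

noncomputable def symEquiv : (symSub V) ≃ₗ[ℝ] (Sym2 V → ℝ) where
  toFun A s := Sym2.lift ⟨fun i j => (A : Matrix V V ℝ) i j,
    fun i j => by simpa using A.2.apply j i⟩ s
  map_add' A B := by
    funext s
    induction s using Sym2.ind with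
    | _ i j => simp
  map_smul' c A := by
    funext s
    induction s using Sym2.ind with
    | _ i j => simp
  invFun f := ⟨Matrix.of fun i j => f s(i, j), by
    show (Matrix.of fun i j => f s(i, j))ᵀ = _
    ext i j
    simp [Sym2.eq_swap]⟩
  left_inv A := by
    ext i j
    simp
  right_inv f := by
    funext s
    induction s using Sym2.ind with
    | _ i j => simp

lemma finrank_symSub : Module.finrank ℝ (symSub V)
    = Fintype.card V * (Fintype.card V + 1) / 2 := by
  rw [LinearEquiv.finrank_eq (symEquiv (V := V)),
    Module.finrank_fintype_fun_eq_card, Sym2.card, Nat.choose_two_right]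
  rw [Nat.mul_comm]
  simp

lemma quad_eval (X : Matrix V V ℝ) (z : V → ℝ) :
    z ⬝ᵥ X.mulVec z = ∑ p, ∑ q, z p * X p q * z q := by
  simp [dotProduct, mulVec, Finset.mul_sum, mul_assoc]

lemma psd_quad_nonneg {X : Matrix V V ℝ} (hX : X.PosSemidef) (z : V → ℝ) :
    0 ≤ z ⬝ᵥ X.mulVec z := by
  simpa using hX.dotProduct_mulVec_nonneg z

lemma psd_apply_nonneg {X : Matrix V V ℝ} (hX : X.PosSemidef) (z : V → ℝ) :
    0 ≤ ∑ p, ∑ q, z p * X p q * z q := by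
  rw [← quad_eval]
  exact psd_quad_nonneg hX z

lemma psd_symm_apply {X : Matrix V V ℝ} (hX : X.PosSemidef) (a b : V) :
    X a b = X b a := by
  have := hX.1.apply a b
  simpa using this.symm

lemma psd_diag_nonneg {X : Matrix V V ℝ} (hX : X.PosSemidef) (i : V) :
    0 ≤ X i i := by
  have := psd_quad_nonneg hX (Pi.single i 1)
  simpa [mulVec_single, dotProduct, Pi.single_apply, ite_mul, mul_ite,
    Finset.sum_ite_eq, Finset.sum_ite_eq'] using this

lemma psd_smul {X : Matrix V V ℝ} (hX : X.PosSemidef) {c : ℝ} (hc : 0 ≤ c) :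
    (c • X).PosSemidef := by
  refine PosSemidef.of_dotProduct_mulVec_nonneg ?_ ?_
  · show (c • X)ᴴ = c • X
    rw [Matrix.conjTranspose_smul, hX.1]
    simp
  · intro x
    have := hX.dotProduct_mulVec_nonneg x
    simp only [Matrix.smul_mulVec, dotProduct_smul, smul_eq_mul]
    exact mul_nonneg hc this

lemma psd_vecMulVec (v : V → ℝ) : (vecMulVec v v).PosSemidef := by
  refine PosSemidef.of_dotProduct_mulVec_nonneg ?_ ?_
  · show (vecMulVec v v)ᴴ = vecMulVec v v
    ext i j
    simp [vecMulVec_apply, mul_comm]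
  · intro x
    have e : (star x) ⬝ᵥ (vecMulVec v v).mulVec x = (v ⬝ᵥ x) * (v ⬝ᵥ x) := by
      simp only [star_trivial, dotProduct, mulVec, vecMulVec_apply]
      rw [Finset.sum_mul]
      apply Finset.sum_congr rfl
      intro p _
      rw [Finset.mul_sum, Finset.mul_sum]
      apply Finset.sum_congr rfl
      intro q _
      ring
    rw [e]
    exact mul_self_nonneg _

lemma psd_row_zero {X : Matrix V V ℝ} (hX : X.PosSemidef) {j : V} (hj : X j j = 0)
    (a : V) : X j a = 0 := by
  rcases eq_or_ne a j with rfl | haj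
  · exact hj
  have key : ∀ t : ℝ, 0 ≤ X a a + 2 * t * X j a := by
    intro t
    have h0 := psd_quad_nonneg hX (Pi.single a 1 + Pi.single j t)
    have e : (Pi.single a (1:ℝ) + Pi.single j t) ⬝ᵥ X.mulVec (Pi.single a 1 + Pi.single j t)
        = X a a + 2*t*X j a := by
      simp [mulVec_add, dotProduct_add, add_dotProduct, mulVec_single, Pi.single_apply,
        dotProduct, mul_ite, ite_mul, zero_mul, mul_zero, add_mul, mul_add,
        Finset.sum_add_distrib, Finset.sum_ite_eq, Finset.sum_ite_eq', hj, haj]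
      rw [psd_symm_apply hX a j]; ring
    rw [e] at h0
    exact h0
  by_contra h
  have h1 := key ((-(X a a) - 1)/(2 * X j a))
  have e2 : 2 * ((-(X a a) - 1)/(2 * X j a)) * X j a = -(X a a) - 1 := by
    field_simp
  rw [e2] at h1
  linarith

end Infra



section Helpers
variable {V : Type*} [Fintype V] [DecidableEq V]

lemma tr_c_vmv (c : Matrix V V ℝ) (u w : V → ℝ) :
    (c * vecMulVec u w).trace = ∑ p, ∑ q, w p * c p q * u q := by
  rw [trace_mul_comm, tr_mul_eq, Finset.sum_comm]
  apply Finset.sum_congr rfl; intro p _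
  apply Finset.sum_congr rfl; intro q _
  rw [vecMulVec_apply]; ring

lemma quad_single (c : Matrix V V ℝ) (k : V) :
    ∑ p, ∑ q, (Pi.single k 1 : V → ℝ) p * c p q * (Pi.single k 1 : V → ℝ) q = c k k := by
  simp [Pi.single_apply, ite_mul, mul_ite, zero_mul, mul_zero,
    Finset.sum_ite_eq, Finset.sum_ite_eq']

lemma quad_two (c : Matrix V V ℝ) (k l : V) (t : ℝ) (hkl : l ≠ k) :
    ∑ p, ∑ q, ((if p = k then (1:ℝ) else 0) + (if p = l then t else 0)) * c p q *
      ((if q = k then (1:ℝ) else 0) + (if q = l then t else 0))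
      = c k k + t * (c k l + c l k) + t^2 * c l l := by
  simp [ite_mul, mul_ite, zero_mul, mul_zero, add_mul, mul_add,
    Finset.sum_add_distrib, Finset.sum_ite_eq, Finset.sum_ite_eq', hkl]
  ring

lemma vmv_add_left (u v w : V → ℝ) :
    vecMulVec (u + v) w = vecMulVec u w + vecMulVec v w := by
  ext x y; simp [vecMulVec_apply]; ring

lemma vmv_add_right (u v w : V → ℝ) :
    vecMulVec u (v + w) = vecMulVec u v + vecMulVec u w := by
  ext x y; simp [vecMulVec_apply]; ring

lemma vmv_neg_left (u w : V → ℝ) : vecMulVec (-u) w = - vecMulVec u w := by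
  ext x y; simp [vecMulVec_apply]

lemma vmv_neg_right (u w : V → ℝ) : vecMulVec u (-w) = - vecMulVec u w := by
  ext x y; simp [vecMulVec_apply]

end Helpers
section NP
variable {V : Type*} [Fintype V] [DecidableEq V]

lemma no_perp (S : Set (Matrix V V ℝ)) (hS : ∀ c ∈ S, c.IsSymm)
    (h : Module.finrank ℝ (Submodule.span ℝ S) = Fintype.card V * (Fintype.card V + 1) / 2)
    (W : Matrix V V ℝ) (hW : W.IsSymm) (hW0 : W ≠ 0)
    (hperp : ∀ c ∈ S, (c * W).trace = 0) : False := by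
  classical
  set φ : Matrix V V ℝ →ₗ[ℝ] ℝ :=
    (Matrix.traceLinearMap V ℝ ℝ).comp (LinearMap.mulRight ℝ W) with hφdef
  have hφ : ∀ c, φ c = (c * W).trace := fun c => rfl
  set K : Submodule ℝ (Matrix V V ℝ) := LinearMap.ker φ ⊓ symSub V with hK
  have hspan : Submodule.span ℝ S ≤ K := by
    rw [Submodule.span_le]
    intro c hc
    refine Submodule.mem_inf.2 ⟨?_, hS c hc⟩
    rw [LinearMap.mem_ker, hφ, hperp c hc]
  have hWφ : φ W ≠ 0 := by
    rw [hφ, tr_mul_eq]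
    have he : ∀ a b : V, W a b * W b a = (W a b)^2 := by
      intro a b
      rw [hW.apply b a]
      ring
    obtain ⟨a, b, hab⟩ : ∃ a b, W a b ≠ 0 := by
      by_contra hcon
      push_neg at hcon
      exact hW0 (by ext a b; exact hcon a b)
    have hpos : 0 < ∑ a, ∑ b, W a b * W b a := by
      apply Finset.sum_pos' (fun x _ => Finset.sum_nonneg fun y _ => by rw [he]; positivity)
      exact ⟨a, Finset.mem_univ a, Finset.sum_pos' (fun y _ => by rw [he]; positivity)
        ⟨b, Finset.mem_univ b, by rw [he]; positivity⟩⟩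
    exact ne_of_gt hpos
  have hKlt : K < symSub V := by
    refine lt_of_le_of_ne inf_le_right (fun hEq => hWφ ?_)
    have : W ∈ K := hEq ▸ (mem_symSub.2 hW)
    exact (Submodule.mem_inf.1 this).1
  have h1 : Module.finrank ℝ K < Module.finrank ℝ (symSub V) :=
    Submodule.finrank_lt_finrank_of_lt hKlt
  have h2 : Module.finrank ℝ (Submodule.span ℝ S) ≤ Module.finrank ℝ K :=
    Submodule.finrank_mono hspan
  rw [h, finrank_symSub] at *
  omega
end NP
section Curves
variable {V : Type*} [Fintype V] [DecidableEq V]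

lemma curve_scale {Ep Em : Set (V × V)}
    (X : Matrix V V ℝ) (hXpsd : X.PosSemidef) (hXtr : X.trace = 1)
    (i : V) (hi0 : 0 < X i i) (hi1 : X i i < 1)
    (c : Matrix V V ℝ)
    (hc : ∀ Y : Matrix V V ℝ, Y.PosSemidef → Y.trace = 1 →
      (∀ e ∈ Ep, 0 ≤ Y e.1 e.2) → (∀ e ∈ Em, Y e.1 e.2 ≤ 0) →
      (c * Y).trace ≤ (c * X).trace)
    (hXp : ∀ e ∈ Ep, 0 ≤ X e.1 e.2) (hXm : ∀ e ∈ Em, X e.1 e.2 ≤ 0) :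
    (∑ b, c i b * X b i) + (∑ a, c a i * X i a) = 2 * (c * X).trace * X i i := by
  set s := (c * X).trace with hs
  set u := (∑ b, c i b * X b i) + (∑ a, c a i * X i a) with hu
  have key : ∀ t : ℝ, |t| ≤ 1/2 →
      t * (u - 2*s*X i i) + t^2 * (c i i * X i i - s * X i i) ≤ 0 := by
    intro t ht
    rcases abs_le.1 ht with ⟨ht1, ht2⟩
    set f : V → ℝ := fun a => if a = i then 1 + t else 1 with hf
    have hfpos : ∀ a, 0 ≤ f a := by
      intro a; rw [hf]; dsimp only
      split <;> linarith
    set d : ℝ := 1 + (2*t + t^2) * X i i with hd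
    have hdpos : 0 < d := by
      rw [hd]
      nlinarith [sq_nonneg (1+t)]
    set M : Matrix V V ℝ := diagonal f * X * diagonal f with hM
    have hMapp : ∀ a b, M a b = f a * X a b * f b := by
      intro a b; rw [hM, Matrix.mul_diagonal, Matrix.diagonal_mul]
    have hstarf : star f = f := funext fun a => star_trivial _
    have hMpsd : M.PosSemidef := by
      have h' := hXpsd.mul_mul_conjTranspose_same (diagonal f)
      rwa [Matrix.diagonal_conjTranspose, hstarf] at h'
    have hMtr : M.trace = d := by
      have e1 : ∀ a, M a a = X a a + (if a = i then (2*t + t^2) * X i i else 0) := by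
        intro a
        rw [hMapp, hf]; dsimp only
        by_cases hai : a = i <;> simp [hai] <;> ring
      have : M.trace = ∑ a, M a a := rfl
      rw [this]
      simp only [e1]
      rw [Finset.sum_add_distrib, Finset.sum_ite_eq' Finset.univ i]
      simp only [Finset.mem_univ, if_true]
      have : ∑ a, X a a = X.trace := rfl
      rw [this, hXtr, hd]
    have hYpsd : (d⁻¹ • M).PosSemidef := psd_smul hMpsd (inv_nonneg.2 hdpos.le)
    have hYtr : (d⁻¹ • M).trace = 1 := by
      rw [Matrix.trace_smul, hMtr, smul_eq_mul, inv_mul_cancel₀ hdpos.ne']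
    have hYp : ∀ e ∈ Ep, 0 ≤ (d⁻¹ • M) e.1 e.2 := by
      intro e he
      rw [Matrix.smul_apply, hMapp, smul_eq_mul]
      have := hXp e he
      have := hfpos e.1
      have := hfpos e.2
      have := inv_nonneg.2 hdpos.le
      positivity
    have hYm : ∀ e ∈ Em, (d⁻¹ • M) e.1 e.2 ≤ 0 := by
      intro e he
      rw [Matrix.smul_apply, hMapp, smul_eq_mul]
      have h1 := hXm e he
      have h2 := hfpos e.1
      have h3 := hfpos e.2
      have h4 := inv_nonneg.2 hdpos.le
      have : f e.1 * X e.1 e.2 * f e.2 ≤ 0 :=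
        mul_nonpos_of_nonpos_of_nonneg (mul_nonpos_of_nonneg_of_nonpos h2 h1) h3
      exact mul_nonpos_of_nonneg_of_nonpos h4 this
    have hineq := hc (d⁻¹ • M) hYpsd hYtr hYp hYm
    have htrM : (c * M).trace = s + t * u + t^2 * (c i i * X i i) := by
      rw [tr_mul_eq]
      have e1 : ∀ a b : V, c a b * M b a
          = c a b * X b a
            + (if b = i then t * (c a b * X b a) else 0)
            + (if a = i then t * (c a b * X b a) else 0)
            + (if a = i then (if b = i then t^2 * (c a b * X b a) else 0) else 0) := by
        intro a b
        rw [hMapp, hf]; dsimp only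
        by_cases hai : a = i <;> by_cases hbi : b = i <;> simp [hai, hbi] <;> ring
      simp only [e1, Finset.sum_add_distrib, Finset.sum_ite_irrel, Finset.sum_ite_eq',
        Finset.mem_univ, if_true, Finset.sum_const_zero]
      rw [hs, tr_mul_eq, hu, mul_add, Finset.mul_sum, Finset.mul_sum]
      ring
    have h2 : d⁻¹ * (s + t*u + t^2*(c i i * X i i)) ≤ s := by
      rw [Matrix.mul_smul, Matrix.trace_smul, smul_eq_mul, htrM] at hineq
      exact hineq
    rw [inv_mul_le_iff₀ hdpos] at h2
    have e2 : t * (u - 2*s*X i i) + t^2 * (c i i * X i i - s * X i i)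
        = (s + t*u + t^2*(c i i * X i i)) - d * s := by rw [hd]; ring
    rw [e2]
    linarith
  have hzero := halfspace_trick _ _ key
  linarith

lemma curve_two {Ep Em : Set (V × V)}
    (hEp : ∀ e ∈ Ep, e.1 ≠ e.2) (hEm : ∀ e ∈ Em, e.1 ≠ e.2)
    (k l : V) (hlk : l ≠ k)
    (hnadj : ¬((k, l) ∈ Ep ∪ Em ∨ (l, k) ∈ Ep ∪ Em))
    (c : Matrix V V ℝ)
    (hc : ∀ Y : Matrix V V ℝ, Y.PosSemidef → Y.trace = 1 →
      (∀ e ∈ Ep, 0 ≤ Y e.1 e.2) → (∀ e ∈ Em, Y e.1 e.2 ≤ 0) →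
      (c * Y).trace ≤ (c * vecMulVec (Pi.single k 1) (Pi.single k 1)).trace) :
    c k l + c l k = 0 := by
  have hkl : ¬(k, l) ∈ Ep ∧ ¬(k, l) ∈ Em ∧ ¬(l, k) ∈ Ep ∧ ¬(l, k) ∈ Em := by
    push_neg at hnadj
    simp only [Set.mem_union, not_or] at hnadj
    exact ⟨hnadj.1.1, hnadj.1.2, hnadj.2.1, hnadj.2.2⟩
  have hs : (c * vecMulVec (Pi.single k 1) (Pi.single k 1)).trace = c k k := by
    rw [tr_c_vmv, quad_single]
  apply halfspace_trick (c k l + c l k) (c l l - c k k)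
  intro t ht
  set w : V → ℝ := fun p => (if p = k then (1:ℝ) else 0) + (if p = l then t else 0) with hw
  have hw0 : ∀ p, p ≠ k → p ≠ l → w p = 0 := by
    intro p h1 h2; simp [hw, h1, h2]
  set d : ℝ := 1 + t^2 with hd
  have hdpos : 0 < d := by positivity
  set Y : Matrix V V ℝ := d⁻¹ • vecMulVec w w with hY
  have hYpsd : Y.PosSemidef := psd_smul (psd_vecMulVec w) (inv_nonneg.2 hdpos.le)
  have hYtr : Y.trace = 1 := by
    rw [hY, Matrix.trace_smul, smul_eq_mul]
    have e1 : (vecMulVec w w).trace = ∑ a, w a * w a := by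
      simp [Matrix.trace, Matrix.diag, vecMulVec_apply]
    have e2 : ∑ a, w a * w a = d := by
      rw [hw, hd]
      simp only [add_mul, mul_add, ite_mul, mul_ite, zero_mul, mul_zero, one_mul, mul_one,
        Finset.sum_add_distrib, Finset.sum_ite_eq', Finset.mem_univ, if_true,
        Finset.sum_const_zero]
      simp [hlk, Ne.symm hlk]
      ring
    rw [e1, e2, inv_mul_cancel₀ hdpos.ne']
  have hwprod : ∀ a b : V, a ≠ b → ¬(a = k ∧ b = l) → ¬(a = l ∧ b = k) → w a * w b = 0 := by
    intro a b hab h1 h2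
    by_cases hak : a = k
    · subst hak
      have hbl : b ≠ l := fun hbl => h1 ⟨rfl, hbl⟩
      rw [hw0 b (Ne.symm hab) hbl, mul_zero]
    · by_cases hal : a = l
      · subst hal
        have hbk : b ≠ k := fun hbk => h2 ⟨rfl, hbk⟩
        rw [hw0 b hbk (Ne.symm hab), mul_zero]
      · rw [hw0 a hak hal, zero_mul]
  have hYp : ∀ e ∈ Ep, 0 ≤ Y e.1 e.2 := by
    intro e he
    rw [hY, Matrix.smul_apply, vecMulVec_apply, smul_eq_mul,
      hwprod e.1 e.2 (hEp e he)
        (fun h => hkl.1 (show (k, l) ∈ Ep from (Prod.ext h.1 h.2 : e = (k,l)) ▸ he))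
        (fun h => hkl.2.2.1 (show (l, k) ∈ Ep from (Prod.ext h.1 h.2 : e = (l,k)) ▸ he)),
      mul_zero]
  have hYm : ∀ e ∈ Em, Y e.1 e.2 ≤ 0 := by
    intro e he
    rw [hY, Matrix.smul_apply, vecMulVec_apply, smul_eq_mul,
      hwprod e.1 e.2 (hEm e he)
        (fun h => hkl.2.1 (show (k, l) ∈ Em from (Prod.ext h.1 h.2 : e = (k,l)) ▸ he))
        (fun h => hkl.2.2.2 (show (l, k) ∈ Em from (Prod.ext h.1 h.2 : e = (l,k)) ▸ he)),
      mul_zero]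
  have hineq := hc Y hYpsd hYtr hYp hYm
  rw [hs] at hineq
  have htr : (c * vecMulVec w w).trace = c k k + t * (c k l + c l k) + t^2 * c l l := by
    rw [tr_c_vmv, hw]
    exact quad_two c k l t hlk
  have h2 : d⁻¹ * (c k k + t * (c k l + c l k) + t^2 * c l l) ≤ c k k := by
    rw [hY, Matrix.mul_smul, Matrix.trace_smul, smul_eq_mul, htr] at hineq
    exact hineq
  rw [inv_mul_le_iff₀ hdpos] at h2
  have e2 : t * (c k l + c l k) + t^2 * (c l l - c k k)
      = (c k k + t * (c k l + c l k) + t^2 * c l l) - d * c k k := by rw [hd]; ring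
  rw [e2]; linarith


section Main
variable {V : Type*} [Fintype V] [DecidableEq V]

lemma trace_X_single (k : V) : (vecMulVec (Pi.single k 1 : V → ℝ) (Pi.single k 1)).trace = 1 := by
  have : (vecMulVec (Pi.single k 1 : V → ℝ) (Pi.single k 1)).trace
      = ∑ a, (Pi.single k 1 : V → ℝ) a * (Pi.single k 1 : V → ℝ) a := by
    simp [Matrix.trace, Matrix.diag, vecMulVec_apply]
  rw [this]
  simp [Pi.single_apply, ite_mul, mul_ite, Finset.sum_ite_eq, Finset.sum_ite_eq']

lemma X_single_apply (k a b : V) :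
    (vecMulVec (Pi.single k 1 : V → ℝ) (Pi.single k 1)) a b
      = (if a = k then (1:ℝ) else 0) * (if b = k then 1 else 0) := by
  rw [vecMulVec_apply]; simp [Pi.single_apply]

lemma X_single_mem {Ep Em : Set (V × V)}
    (hEp : ∀ e ∈ Ep, e.1 ≠ e.2) (hEm : ∀ e ∈ Em, e.1 ≠ e.2) (k : V) :
    (vecMulVec (Pi.single k 1 : V → ℝ) (Pi.single k 1)).PosSemidef ∧
    (vecMulVec (Pi.single k 1 : V → ℝ) (Pi.single k 1)).trace = 1 ∧
    (∀ e ∈ Ep, 0 ≤ (vecMulVec (Pi.single k 1 : V → ℝ) (Pi.single k 1)) e.1 e.2) ∧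
    (∀ e ∈ Em, (vecMulVec (Pi.single k 1 : V → ℝ) (Pi.single k 1)) e.1 e.2 ≤ 0) := by
  refine ⟨psd_vecMulVec _, trace_X_single k, fun e he => ?_, fun e he => ?_⟩
  · rw [X_single_apply]
    rcases eq_or_ne e.1 k with h1 | h1
    · have : e.2 ≠ k := h1 ▸ (hEp e he).symm
      simp [this]
    · simp [h1]
  · rw [X_single_apply]
    rcases eq_or_ne e.1 k with h1 | h1
    · have : e.2 ≠ k := h1 ▸ (hEm e he).symm
      simp [this]
    · simp [h1]

lemma quad_at_single (k : V) (v : V → ℝ) :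
    ∑ p, ∑ q, v p * (vecMulVec (Pi.single k 1 : V → ℝ) (Pi.single k 1)) p q * v q
      = v k * v k := by
  simp only [X_single_apply]
  simp [ite_mul, mul_ite, zero_mul, mul_zero, Finset.sum_ite_eq, Finset.sum_ite_eq',
    Finset.sum_ite_irrel, Finset.sum_const_zero]

end Main


end Curves

section Span
variable {V : Type*} [Fintype V] [DecidableEq V]

lemma quad_pair (c : Matrix V V ℝ) (a b : V) :
    ∑ p, ∑ q, (Pi.single a 1 : V → ℝ) p * c p q * (Pi.single b 1 : V → ℝ) q = c a b := by
  simp [Pi.single_apply, ite_mul, mul_ite, zero_mul, mul_zero,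
    Finset.sum_ite_eq, Finset.sum_ite_eq', Finset.sum_ite_irrel, Finset.sum_const_zero]

lemma span_full {Ep Em : Set (V × V)}
    (hEp : ∀ e ∈ Ep, e.1 ≠ e.2) (hEm : ∀ e ∈ Em, e.1 ≠ e.2)
    (C : Set (Matrix V V ℝ))
    (hC : C = {X | X.PosSemidef ∧ X.trace = 1 ∧
      (∀ e ∈ Ep, 0 ≤ X e.1 e.2) ∧ (∀ e ∈ Em, X e.1 e.2 ≤ 0)})
    (k : V) (hadj : ∀ l, l ≠ k → ((k, l) ∈ Ep ∪ Em ∨ (l, k) ∈ Ep ∪ Em)) :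
    Submodule.span ℝ (normalConeM C (vecMulVec (Pi.single k 1) (Pi.single k 1)))
      = symSub V := by
  set X : Matrix V V ℝ := vecMulVec (Pi.single k 1) (Pi.single k 1) with hX
  have hfacts : ∀ Y ∈ C, Y.PosSemidef ∧ Y.trace = 1 ∧
      (∀ e ∈ Ep, 0 ≤ Y e.1 e.2) ∧ (∀ e ∈ Em, Y e.1 e.2 ≤ 0) := by
    rw [hC]; exact fun Y h => h
  have tr_with_vmv : ∀ (c : Matrix V V ℝ) (u w : V → ℝ),
      (vecMulVec u w * c).trace = ∑ p, ∑ q, w p * c p q * u q := by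
    intro c u w
    rw [Matrix.trace_mul_comm]
    exact tr_c_vmv c u w
  have one_mem : (1 : Matrix V V ℝ) ∈ normalConeM C X := by
    refine ⟨Matrix.isSymm_one, fun Y hY => ?_⟩
    rw [one_mul, one_mul, (hfacts Y hY).2.1, hX, trace_X_single]
  have cone_neg_vmv : ∀ v : V → ℝ, v k = 0 →
      -(vecMulVec v v) ∈ normalConeM C X := by
    intro v hv
    constructor
    · show (-(vecMulVec v v))ᵀ = -(vecMulVec v v)
      ext x y
      simp [vecMulVec_apply, mul_comm]
    · intro Y hY
      rw [Matrix.neg_mul, Matrix.neg_mul, Matrix.trace_neg, Matrix.trace_neg,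
        neg_le_neg_iff, tr_with_vmv, tr_with_vmv, hX, quad_at_single, hv]
      norm_num
      exact psd_apply_nonneg (hfacts Y hY).1 v
  have edge_mem : ∀ l, l ≠ k →
      vecMulVec (Pi.single k 1 : V → ℝ) (Pi.single l 1)
        + vecMulVec (Pi.single l 1 : V → ℝ) (Pi.single k 1)
        ∈ Submodule.span ℝ (normalConeM C X) := by
    intro l hlk
    set H : Matrix V V ℝ := vecMulVec (Pi.single k 1) (Pi.single l 1)
      + vecMulVec (Pi.single l 1) (Pi.single k 1) with hH
    have hHsymm : H.IsSymm := by
      show Hᵀ = H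
      ext x y
      simp only [hH, Matrix.transpose_apply, Matrix.add_apply, vecMulVec_apply]
      ring
    have htrH : ∀ c : Matrix V V ℝ, (H * c).trace = c l k + c k l := by
      intro c
      rw [hH, Matrix.add_mul, Matrix.trace_add, tr_with_vmv, tr_with_vmv,
        quad_pair, quad_pair]
    have htrHX : (H * X).trace = 0 := by
      rw [htrH, hX, X_single_apply, X_single_apply]
      simp [hlk]
    have hsign : (∀ Y, Y ∈ C → 0 ≤ Y l k + Y k l) ∨ (∀ Y, Y ∈ C → Y l k + Y k l ≤ 0) := by
      rcases hadj l hlk with hmem | hmem <;> rcases hmem with hp | hm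
      · left; intro Y hY
        have h0 := (hfacts Y hY).2.2.1 (k, l) hp
        have hsy := psd_symm_apply (hfacts Y hY).1 l k
        simp only at h0
        linarith
      · right; intro Y hY
        have h0 := (hfacts Y hY).2.2.2 (k, l) hm
        have hsy := psd_symm_apply (hfacts Y hY).1 l k
        simp only at h0
        linarith
      · left; intro Y hY
        have h0 := (hfacts Y hY).2.2.1 (l, k) hp
        have hsy := psd_symm_apply (hfacts Y hY).1 l k
        simp only at h0
        linarith
      · right; intro Y hY
        have h0 := (hfacts Y hY).2.2.2 (l, k) hm
        have hsy := psd_symm_apply (hfacts Y hY).1 l k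
        simp only at h0
        linarith
    rcases hsign with hs | hs
    · have hcone : -H ∈ normalConeM C X := by
        refine ⟨?_, fun Y hY => ?_⟩
        · show (-H)ᵀ = -H
          rw [Matrix.transpose_neg, hHsymm]
        · rw [Matrix.neg_mul, Matrix.neg_mul, Matrix.trace_neg, Matrix.trace_neg,
            neg_le_neg_iff, htrHX, htrH]
          exact hs Y hY
      have hHH : H = -(-H) := (neg_neg H).symm
      rw [hHH]
      exact Submodule.neg_mem (Submodule.span ℝ (normalConeM C X)) (Submodule.subset_span hcone)
    · have hcone : H ∈ normalConeM C X := by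
        refine ⟨hHsymm, fun Y hY => ?_⟩
        rw [htrHX, htrH]
        exact hs Y hY
      exact Submodule.subset_span hcone
  apply le_antisymm
  · rw [Submodule.span_le]
    intro c hc
    exact hc.1
  · intro A hA
    have hAsymm : Matrix.IsSymm A := hA
    have diag_mem : ∀ a : V, vecMulVec (Pi.single a 1 : V → ℝ) (Pi.single a 1)
        ∈ Submodule.span ℝ (normalConeM C X) := by
      intro a
      rcases eq_or_ne a k with rfl | hak
      · have hsum : ∑ j : V, vecMulVec (Pi.single j 1 : V → ℝ) (Pi.single j 1)
            = (1 : Matrix V V ℝ) := by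
          ext x y
          simp only [Matrix.sum_apply, X_single_apply, Matrix.one_apply]
          simp only [ite_mul, mul_ite, one_mul, mul_one, zero_mul, mul_zero,
            Finset.sum_ite_eq, Finset.mem_univ, if_true]
        have hkey := Finset.add_sum_erase Finset.univ
          (fun j => vecMulVec (Pi.single j 1 : V → ℝ) (Pi.single j 1)) (Finset.mem_univ a)
        rw [hsum] at hkey
        have hid : vecMulVec (Pi.single a 1 : V → ℝ) (Pi.single a 1)
            = 1 - ∑ j ∈ Finset.univ.erase a,
                vecMulVec (Pi.single j 1 : V → ℝ) (Pi.single j 1) := by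
          rw [← hkey]; abel
        rw [hid]
        refine Submodule.sub_mem _ (Submodule.subset_span one_mem)
          (Submodule.sum_mem _ fun j hj => ?_)
        have hjk : j ≠ a := (Finset.mem_erase.1 hj).1
        have hmem := Submodule.neg_mem (Submodule.span ℝ (normalConeM C X)) (Submodule.subset_span
          (cone_neg_vmv (Pi.single j 1)
            (show (Pi.single j 1 : V → ℝ) a = 0 from Pi.single_eq_of_ne (Ne.symm hjk) 1)))
        simpa using hmem
      · have hmem := Submodule.neg_mem (Submodule.span ℝ (normalConeM C X)) (Submodule.subset_span
          (cone_neg_vmv (Pi.single a 1)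
            (show (Pi.single a 1 : V → ℝ) k = 0 from Pi.single_eq_of_ne (Ne.symm hak) 1)))
        simpa using hmem
    have pair_mem : ∀ a b : V,
        vecMulVec (Pi.single a 1 : V → ℝ) (Pi.single b 1)
          + vecMulVec (Pi.single b 1 : V → ℝ) (Pi.single a 1)
          ∈ Submodule.span ℝ (normalConeM C X) := by
      intro a b
      rcases eq_or_ne a b with rfl | hab
      · exact Submodule.add_mem _ (diag_mem a) (diag_mem a)
      rcases eq_or_ne a k with rfl | hak
      · exact edge_mem b (Ne.symm hab)
      rcases eq_or_ne b k with rfl | hbk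
      · rw [add_comm]
        exact edge_mem a hak
      set u : V → ℝ := Pi.single a 1 + Pi.single b 1 with hu
      set v : V → ℝ := Pi.single a 1 - Pi.single b 1 with hv
      have hid : vecMulVec (Pi.single a 1 : V → ℝ) (Pi.single b 1)
          + vecMulVec (Pi.single b 1 : V → ℝ) (Pi.single a 1)
          = (2⁻¹ : ℝ) • (vecMulVec u u - vecMulVec v v) := by
        ext x y
        simp only [hu, hv, Matrix.add_apply, Matrix.smul_apply, Matrix.sub_apply,
          vecMulVec_apply, Pi.add_apply, Pi.sub_apply, smul_eq_mul]
        ring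
      rw [hid]
      have huk : u k = 0 := by
        rw [hu]
        simp [Pi.single_eq_of_ne (Ne.symm hak), Pi.single_eq_of_ne (Ne.symm hbk)]
      have hvk : v k = 0 := by
        rw [hv]
        simp [Pi.single_eq_of_ne (Ne.symm hak), Pi.single_eq_of_ne (Ne.symm hbk)]
      refine Submodule.smul_mem _ _ (Submodule.sub_mem _ ?_ ?_)
      · have hmem := Submodule.neg_mem (Submodule.span ℝ (normalConeM C X)) (Submodule.subset_span (cone_neg_vmv u huk))
        simpa using hmem
      · have hmem := Submodule.neg_mem (Submodule.span ℝ (normalConeM C X)) (Submodule.subset_span (cone_neg_vmv v hvk))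
        simpa using hmem
    have hrep : A = (2⁻¹ : ℝ) • ∑ a : V, ∑ b : V, A a b •
        (vecMulVec (Pi.single a 1 : V → ℝ) (Pi.single b 1)
          + vecMulVec (Pi.single b 1 : V → ℝ) (Pi.single a 1)) := by
      ext x y
      simp only [Matrix.smul_apply, Matrix.sum_apply, Matrix.add_apply,
        vecMulVec_apply, Pi.single_apply, smul_eq_mul]
      simp only [mul_add, mul_ite, ite_mul, mul_one, mul_zero, one_mul, zero_mul,
        Finset.sum_add_distrib, Finset.sum_ite_irrel, Finset.sum_ite_eq,
        Finset.sum_ite_eq', Finset.mem_univ, if_true, Finset.sum_const_zero]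
      rw [hAsymm.apply x y]
      ring
    rw [hrep]
    exact Submodule.smul_mem _ _ (Submodule.sum_mem _ fun a _ =>
      Submodule.sum_mem _ fun b _ => Submodule.smul_mem _ _ (pair_mem a b))

end Span


theorem theta3_vertices {V : Type*} [Fintype V] [DecidableEq V]
    (Ep Em : Set (V × V)) (hEp : ∀ e ∈ Ep, e.1 ≠ e.2) (hEm : ∀ e ∈ Em, e.1 ≠ e.2)
    (C : Set (Matrix V V ℝ))
    (hC : C = {X | X.PosSemidef ∧ X.trace = 1 ∧
      (∀ e ∈ Ep, 0 ≤ X e.1 e.2) ∧ (∀ e ∈ Em, X e.1 e.2 ≤ 0)}) :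
    {X | X ∈ C ∧ IsVertex C X} =
      {X | ∃ k : V,
        {l : V | l ≠ k ∧ ((k, l) ∈ Ep ∪ Em ∨ (l, k) ∈ Ep ∪ Em)}.ncard
          = Fintype.card V - 1 ∧
        X = Matrix.vecMulVec (Pi.single k 1) (Pi.single k 1)} := by
  classical
  have hBcard : ∀ k : V, ({l : V | l ≠ k}).ncard = Fintype.card V - 1 := by
    intro k
    have : {l : V | l ≠ k} = ((({k} : Finset V)ᶜ : Finset V) : Set V) := by
      ext l; simp
    rw [this, Set.ncard_coe_finset, Finset.card_compl, Finset.card_singleton]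
  subst hC
  ext X
  simp only [Set.mem_setOf_eq]
  constructor
  · rintro ⟨hXC, -, hdim⟩
    obtain ⟨hXpsd, hXtr, hXp, hXm⟩ := hXC
    have perp : ∀ W : Matrix V V ℝ, W.IsSymm → W ≠ 0 →
        (∀ c ∈ normalConeM {X : Matrix V V ℝ | X.PosSemidef ∧ X.trace = 1 ∧
          (∀ e ∈ Ep, 0 ≤ X e.1 e.2) ∧ (∀ e ∈ Em, X e.1 e.2 ≤ 0)} X,
          (c * W).trace = 0) → False := by
      intro W h1 h2 h3
      exact no_perp _ (fun c hc => hc.1) hdim W h1 h2 h3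
    have hEkk : ∃ k, X = vecMulVec (Pi.single k 1) (Pi.single k 1) := by
      by_cases hone : ∃ k, X k k = 1
      · obtain ⟨k, hk⟩ := hone
        refine ⟨k, ?_⟩
        have hsum : ∑ a, X a a = 1 := hXtr
        have hdiag0 : ∀ j, j ≠ k → X j j = 0 := by
          intro j hj
          have hkey : X k k + ∑ a ∈ Finset.univ.erase k, X a a = ∑ a, X a a :=
            Finset.add_sum_erase Finset.univ (fun a => X a a) (Finset.mem_univ k)
          have hrest : ∑ a ∈ Finset.univ.erase k, X a a = 0 := by
            rw [hsum, hk] at hkey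
            linarith
          exact (Finset.sum_eq_zero_iff_of_nonneg
            (fun a _ => psd_diag_nonneg hXpsd a)).1 hrest j
            (Finset.mem_erase.2 ⟨hj, Finset.mem_univ j⟩)
        ext a b
        rw [X_single_apply]
        rcases eq_or_ne a k with hak | hak
        · rcases eq_or_ne b k with hbk | hbk
          · rw [hak, hbk, hk]
            norm_num
          · have h0 : X b b = 0 := hdiag0 b hbk
            have h1 : X b a = 0 := psd_row_zero hXpsd h0 a
            rw [psd_symm_apply hXpsd a b, h1, if_neg hbk]
            simp
        · have h0 : X a a = 0 := hdiag0 a hak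
          rw [psd_row_zero hXpsd h0 b, if_neg hak]
          simp
      · exfalso
        push_neg at hone
        obtain ⟨i, hipos⟩ : ∃ i, 0 < X i i := by
          by_contra hno
          push_neg at hno
          have hz : X.trace = 0 :=
            Finset.sum_eq_zero (fun a _ =>
              le_antisymm (hno a) (psd_diag_nonneg hXpsd a))
          rw [hXtr] at hz
          norm_num at hz
        have hile : X i i ≤ 1 := by
          have h' : X i i ≤ ∑ a, X a a := Finset.single_le_sum (f := fun a => X a a)
            (fun a _ => psd_diag_nonneg hXpsd a) (Finset.mem_univ i)
          have hsum1 : ∑ a, X a a = 1 := hXtr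
          linarith
        have hilt : X i i < 1 := lt_of_le_of_ne hile (hone i)
        set W : Matrix V V ℝ := Matrix.of (fun a b =>
          (if a = i then X i b else 0) + (if b = i then X a i else 0)
            - 2 * X i i * X a b) with hWdef
        have hWapp : ∀ a b, W a b = (if a = i then X i b else 0)
            + (if b = i then X a i else 0) - 2 * X i i * X a b := fun a b => rfl
        have hWsymm : W.IsSymm := by
          show Wᵀ = W
          ext a b
          rw [Matrix.transpose_apply, hWapp, hWapp,
            ← psd_symm_apply hXpsd a b, ← psd_symm_apply hXpsd a i,
            ← psd_symm_apply hXpsd i b]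
          ring
        have hW0 : W ≠ 0 := by
          intro h
          have h1 := congrFun (congrFun h i) i
          rw [hWapp] at h1
          simp only [if_pos rfl, if_true, Matrix.zero_apply] at h1
          nlinarith [mul_pos hipos (sub_pos.2 hilt)]
        apply perp W hWsymm hW0
        intro c hc
        have hcu := curve_scale (Ep := Ep) (Em := Em) X hXpsd hXtr i hipos hilt c
          (fun Y h1 h2 h3 h4 => hc.2 Y ⟨h1, h2, h3, h4⟩) hXp hXm
        rw [tr_mul_eq]
        have e1 : ∀ a b : V, c a b * W b a
            = (if b = i then c a b * X i a else 0)
              + (if a = i then c a b * X b i else 0)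
              - 2 * X i i * (c a b * X b a) := by
          intro a b
          rw [hWapp]
          by_cases hai : a = i <;> by_cases hbi : b = i <;> simp [hai, hbi] <;> ring
        simp only [e1, Finset.sum_sub_distrib, Finset.sum_add_distrib,
          Finset.sum_ite_irrel, Finset.sum_ite_eq', Finset.mem_univ, if_true,
          Finset.sum_const_zero, ← Finset.mul_sum]
        rw [← tr_mul_eq]
        linarith [hcu]
    obtain ⟨k, hk⟩ := hEkk
    have hadj : ∀ l, l ≠ k → ((k, l) ∈ Ep ∪ Em ∨ (l, k) ∈ Ep ∪ Em) := by
      intro l hlk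
      by_contra hnadj
      set W : Matrix V V ℝ := vecMulVec (Pi.single k 1) (Pi.single l 1)
        + vecMulVec (Pi.single l 1) (Pi.single k 1) with hWdef
      have hWsymm : W.IsSymm := by
        show Wᵀ = W
        ext x y
        simp only [hWdef, Matrix.transpose_apply, Matrix.add_apply, vecMulVec_apply]
        ring
      have hW0 : W ≠ 0 := by
        intro h
        have h1 := congrFun (congrFun h k) l
        simp only [hWdef, Matrix.add_apply, vecMulVec_apply, Matrix.zero_apply,
          Pi.single_apply, if_pos rfl] at h1
        rw [if_neg hlk, if_neg (Ne.symm hlk)] at h1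
        norm_num at h1
      apply perp W hWsymm hW0
      intro c hc
      have hu := curve_two hEp hEm k l hlk hnadj c (fun Y h1 h2 h3 h4 => by
        have := hc.2 Y ⟨h1, h2, h3, h4⟩
        rwa [hk] at this)
      rw [hWdef, Matrix.mul_add, Matrix.trace_add, tr_c_vmv, tr_c_vmv,
        quad_pair, quad_pair]
      linarith
    refine ⟨k, ?_, hk⟩
    have hsetEq : {l : V | l ≠ k ∧ ((k, l) ∈ Ep ∪ Em ∨ (l, k) ∈ Ep ∪ Em)}
        = {l : V | l ≠ k} := by
      ext l
      simp only [Set.mem_setOf_eq, and_iff_left_iff_imp]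
      exact hadj l
    rw [hsetEq, hBcard]
  · rintro ⟨k, hdeg, rfl⟩
    have hadj : ∀ l, l ≠ k → ((k, l) ∈ Ep ∪ Em ∨ (l, k) ∈ Ep ∪ Em) := by
      have hAB : {l : V | l ≠ k ∧ ((k, l) ∈ Ep ∪ Em ∨ (l, k) ∈ Ep ∪ Em)}
          ⊆ {l : V | l ≠ k} := fun x hx => hx.1
      have hEq : {l : V | l ≠ k ∧ ((k, l) ∈ Ep ∪ Em ∨ (l, k) ∈ Ep ∪ Em)}
          = {l : V | l ≠ k} := by
        exact Set.eq_of_subset_of_ncard_le hAB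
          (by rw [hBcard, hdeg]) (Set.toFinite _)
      intro l hl
      have : l ∈ {l : V | l ≠ k} := hl
      rw [← hEq] at this
      exact this.2
    have hmem : vecMulVec (Pi.single k 1 : V → ℝ) (Pi.single k 1) ∈
        {X : Matrix V V ℝ | X.PosSemidef ∧ X.trace = 1 ∧
          (∀ e ∈ Ep, 0 ≤ X e.1 e.2) ∧ (∀ e ∈ Em, X e.1 e.2 ≤ 0)} :=
      X_single_mem hEp hEm k
    refine ⟨hmem, hmem, ?_⟩
    rw [span_full hEp hEm _ rfl k hadj, finrank_symSub]
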